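/- Let V be a VOA and W a C_1-cofinite ℕ-gradable V-module. Then the operator Ξ = L(0) − wt(·) (where wt(·) acts on the generalized L(0)-eigenspace W_s as multiplication by s) is a V-module endomorphism of W, and there exists K ∈ ℕ such that Ξ^K W = 0 and Ξ^K W^∨ = 0, where W^∨ is the contragredient module. -/

import Mathlib

/-- Abstract form of Lemma 2.12: for a `C₁`-cofinite ℕ-gradable module `W`
(graded pieces `ℬ m` finite-dimensional, generated from a finite-dimensional
graded subspace `P` by the grade-raising operators `T n`, `n ≥ 1`), any
endomorphism `Ξ` (such as `Ξ = L(0) - wt(·)`) which preserves the grading,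
commutes with the module action (i.e. with all operators in the `T n`), and is
locally nilpotent on each graded piece, is globally nilpotent: there is `K ∈ ℕ`
with `Ξ^K W = 0` and `Ξ^K W^∨ = 0` for the contragredient (dual) action. -/
theorem xi_nilpotent
    {W : Type*} [AddCommGroup W] [Module ℂ W]
    (ℬ : ℕ → Submodule ℂ W) (hdec : DirectSum.IsInternal ℬ)
    (hfinB : ∀ m, FiniteDimensional ℂ (ℬ m))
    (T : ℕ → Submodule ℂ (Module.End ℂ W))
    (hThom : ∀ n, ∀ f ∈ T n, ∀ m, ∀ w ∈ ℬ m, f w ∈ ℬ (m + n))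
    (P : Submodule ℂ W) (hPfin : FiniteDimensional ℂ P)
    (hPhom : P = ⨆ m, (P ⊓ ℬ m))
    (hC1P : (⨆ (n : ℕ) (_ : 1 ≤ n) (f : T n), LinearMap.range (f : Module.End ℂ W))
        ⊔ P = ⊤)
    (Ξ : Module.End ℂ W)
    (hΞhom : ∀ m, ∀ w ∈ ℬ m, Ξ w ∈ ℬ m)
    (hΞloc : ∀ m, ∀ w ∈ ℬ m, ∃ k : ℕ, (Ξ ^ k) w = 0)
    (hΞcomm : ∀ n, ∀ f ∈ T n, Commute Ξ f) :
    ∃ K : ℕ, (Ξ ^ K = 0) ∧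
      ((Ξ.dualMap : Module.End ℂ (Module.Dual ℂ W)) ^ K = 0) := by
  classical
  set e : DirectSum ℕ (fun m => ↥(ℬ m)) ≃ₗ[ℂ] W :=
    LinearEquiv.ofBijective (DirectSum.coeLinearMap ℬ) hdec with he
  -- the projection onto the m-th graded piece, viewed as an endomorphism of W
  set π : ℕ → Module.End ℂ W := fun m =>
    (ℬ m).subtype ∘ₗ (DirectSum.component ℂ ℕ (fun i => ℬ i) m) ∘ₗ e.symm.toLinearMap
    with hπdef
  have hπ_apply : ∀ m (w : W), π m w = ((e.symm w) m : W) := fun m w => rfl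
  have hπ_same : ∀ m, ∀ w ∈ ℬ m, π m w = w := by
    intro m w hw
    rw [hπ_apply, hdec.ofBijective_coeLinearMap_of_mem hw]
  have hπ_ne : ∀ m k, k ≠ m → ∀ w ∈ ℬ k, π m w = 0 := by
    intro m k hkm w hw
    rw [hπ_apply, hdec.ofBijective_coeLinearMap_of_mem_ne hkm hw]
    simp
  have hπ_mem : ∀ m (w : W), π m w ∈ ℬ m := by
    intro m w
    rw [hπ_apply]
    exact ((e.symm w) m).2
  -- two endomorphisms agreeing on every graded piece agree
  have hext : ∀ (g h : Module.End ℂ W), (∀ k, ∀ w ∈ ℬ k, g w = h w) → g = h := by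
    intro g h hgh
    ext w
    have hw : w ∈ ⨆ k, ℬ k := hdec.submodule_iSup_eq_top ▸ Submodule.mem_top
    refine Submodule.iSup_induction (motive := fun w => g w = h w) ℬ hw
      (fun k w hw => hgh k w hw) (by simp) ?_
    intro x y hx hy
    simp [map_add, hx, hy]
  -- Ξ commutes with the projections
  have hcommπ' : ∀ m, Ξ * π m = π m * Ξ := by
    intro m
    refine hext _ _ (fun k w hw => ?_)
    simp only [Module.End.mul_apply]
    by_cases hkm : k = m
    · subst hkm
      rw [hπ_same k w hw, hπ_same k _ (hΞhom k w hw)]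
    · rw [hπ_ne m k hkm w hw, hπ_ne m k hkm _ (hΞhom k w hw), map_zero]
  -- shifting relation for graded operators
  have hshift : ∀ n (f : Module.End ℂ W), f ∈ T n → ∀ m, n ≤ m →
      π m * f = f * π (m - n) := by
    intro n f hf m hnm
    refine hext _ _ (fun k w hw => ?_)
    simp only [Module.End.mul_apply]
    have hfw : f w ∈ ℬ (k + n) := hThom n f hf k w hw
    by_cases hkm : k + n = m
    · have hk : k = m - n := by omega
      subst hk
      rw [hπ_same m _ (hkm ▸ hfw), hπ_same _ w hw]
    · have hk : k ≠ m - n := by omega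
      rw [hπ_ne m (k + n) hkm _ hfw, hπ_ne (m - n) k hk w hw, map_zero]
  have hshift0 : ∀ n (f : Module.End ℂ W), f ∈ T n → ∀ m, m < n →
      π m * f = 0 := by
    intro n f hf m hnm
    refine hext _ _ (fun k w hw => ?_)
    simp only [Module.End.mul_apply, LinearMap.zero_apply]
    have hfw : f w ∈ ℬ (k + n) := hThom n f hf k w hw
    exact hπ_ne m (k + n) (by omega) _ hfw
  -- monotonicity of being killed by powers of Ξ
  have hmono : ∀ (a b : ℕ) (x : W), a ≤ b → (Ξ ^ a) x = 0 → (Ξ ^ b) x = 0 := by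
    intro a b x hab h
    have : Ξ ^ b = Ξ ^ (b - a) * Ξ ^ a := by
      rw [← pow_add]; congr 1; omega
    rw [this, Module.End.mul_apply, h, map_zero]
  -- every vector is killed by some power of Ξ
  have hlocal : ∀ w : W, ∃ k : ℕ, (Ξ ^ k) w = 0 := by
    intro w
    have hw : w ∈ ⨆ k, ℬ k := hdec.submodule_iSup_eq_top ▸ Submodule.mem_top
    refine Submodule.iSup_induction (motive := fun w => ∃ k : ℕ, (Ξ ^ k) w = 0) ℬ hw
      (fun k w hw => hΞloc k w hw) ⟨0, by simp⟩ ?_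
    rintro x y ⟨kx, hkx⟩ ⟨ky, hky⟩
    exact ⟨max kx ky, by
      rw [map_add, hmono kx (max kx ky) x (le_max_left _ _) hkx,
        hmono ky (max kx ky) y (le_max_right _ _) hky, add_zero]⟩
  choose kf hkf using hlocal
  -- P is finitely generated, get a uniform power K killing P
  have hfg : P.FG := Module.Finite.iff_fg.mp hPfin
  obtain ⟨S, hS⟩ := hfg
  set K : ℕ := S.sup kf with hK
  have hPker : P ≤ LinearMap.ker (Ξ ^ K) := by
    rw [← hS, Submodule.span_le]
    intro g hg
    simp only [SetLike.mem_coe, LinearMap.mem_ker]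
    exact hmono (kf g) K g (Finset.le_sup hg) (hkf g)
  -- main claim: Ξ^K kills every graded piece, by strong induction on the grade
  have hmain : ∀ m, ∀ w ∈ ℬ m, (Ξ ^ K) w = 0 := by
    intro m
    induction m using Nat.strong_induction_on with
    | _ m IH =>
      intro w hw
      have hwtop : w ∈ (⨆ (n : ℕ) (_ : 1 ≤ n) (f : T n),
          LinearMap.range (f : Module.End ℂ W)) ⊔ P := hC1P ▸ Submodule.mem_top
      obtain ⟨r, hr, p, hp, hrp⟩ := Submodule.mem_sup.mp hwtop
      -- Ξ^K kills π m r
      have hr0 : (Ξ ^ K) (π m r) = 0 := by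
        have hle : (⨆ (n : ℕ) (_ : 1 ≤ n) (f : T n),
            LinearMap.range (f : Module.End ℂ W)) ≤
            LinearMap.ker ((Ξ ^ K) ∘ₗ π m) := by
          refine iSup_le fun n => iSup_le fun hn => iSup_le fun f => ?_
          rintro _ ⟨x, rfl⟩
          simp only [LinearMap.mem_ker, LinearMap.comp_apply]
          by_cases hnm : n ≤ m
          · have h1 : π m ((f : Module.End ℂ W) x)
                = (f : Module.End ℂ W) (π (m - n) x) := by
              have := hshift n f f.2 m hnm
              calc π m ((f : Module.End ℂ W) x)
                  = (π m * (f : Module.End ℂ W)) x := rfl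
                _ = ((f : Module.End ℂ W) * π (m - n)) x := by rw [this]
                _ = (f : Module.End ℂ W) (π (m - n) x) := rfl
            rw [h1]
            have hcomm : Commute (Ξ ^ K) (f : Module.End ℂ W) :=
              (hΞcomm n f f.2).pow_left K
            have h2 : (Ξ ^ K) ((f : Module.End ℂ W) (π (m - n) x))
                = (f : Module.End ℂ W) ((Ξ ^ K) (π (m - n) x)) := by
              calc (Ξ ^ K) ((f : Module.End ℂ W) (π (m - n) x))
                  = ((Ξ ^ K) * (f : Module.End ℂ W)) (π (m - n) x) := rfl
                _ = ((f : Module.End ℂ W) * (Ξ ^ K)) (π (m - n) x) := by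
                    rw [hcomm.eq]
                _ = _ := rfl
            have hIH : (Ξ ^ K) (π (m - n) x) = 0 :=
              IH (m - n) (by omega) _ (hπ_mem (m - n) x)
            rw [h2, hIH, map_zero]
          · have h1 : π m ((f : Module.End ℂ W) x) = 0 := by
              have := hshift0 n f f.2 m (by omega)
              calc π m ((f : Module.End ℂ W) x)
                  = (π m * (f : Module.End ℂ W)) x := rfl
                _ = (0 : Module.End ℂ W) x := by rw [this]
                _ = 0 := rfl
            rw [h1, map_zero]
        exact hle hr
      -- Ξ^K kills π m p
      have hp0 : (Ξ ^ K) (π m p) = 0 := by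
        have hc : Ξ ^ K * π m = π m * Ξ ^ K := by
          have : Commute Ξ (π m) := hcommπ' m
          exact (this.pow_left K).eq
        have h2 : (Ξ ^ K) (π m p) = π m ((Ξ ^ K) p) := by
          calc (Ξ ^ K) (π m p) = (Ξ ^ K * π m) p := rfl
            _ = (π m * Ξ ^ K) p := by rw [hc]
            _ = π m ((Ξ ^ K) p) := rfl
        rw [h2, LinearMap.mem_ker.mp (hPker hp), map_zero]
      have hww : w = π m w := (hπ_same m w hw).symm
      calc (Ξ ^ K) w = (Ξ ^ K) (π m w) := by rw [← hww]
        _ = (Ξ ^ K) (π m r) + (Ξ ^ K) (π m p) := by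
            rw [← hrp, map_add, map_add]
        _ = 0 := by rw [hr0, hp0, add_zero]
  have hK0 : Ξ ^ K = 0 := by
    refine hext _ _ (fun k w hw => ?_)
    simpa using hmain k w hw
  -- the dual statement
  have hdual : ∀ j : ℕ, (Ξ.dualMap : Module.End ℂ (Module.Dual ℂ W)) ^ j
      = (Ξ ^ j).dualMap := by
    intro j
    induction j with
    | zero =>
      ext φ w
      rfl
    | succ j ih =>
      rw [pow_succ, ih, pow_succ']
      exact LinearMap.dualMap_comp_dualMap (Ξ ^ j) Ξ
  refine ⟨K, hK0, ?_⟩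
  rw [hdual, hK0]
  ext φ w
  simp [LinearMap.dualMap_apply]
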